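/- Let (D_λ)_{λ∈Λ} be a family of integral domains, T a subring of R = ∏_{λ∈Λ} D_λ, and F an ultrafilter on Λ. Then (0)_F^T = {x ∈ T | z(x) ∈ F} is a prime ideal of T. Moreover, every minimal prime ideal of T is of the form (0)_G^T for some ultrafilter G on Λ. -/

import Mathlib

/-!
Common setup: `Λ` is an index set, `D λ` a family of commutative rings,
`R = ∏ λ, D λ` the product ring, and
`B = ∏ λ, P(max (D λ))` the product Boolean algebra of the power sets of the
sets of maximal ideals, realized as the Pi type `∀ l, Set (MaximalSpectrum (D l))`
with its componentwise Boolean algebra structure (meet = componentwise ∩,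
join = componentwise ∪, `⊥ = (∅)_λ`, complement componentwise, order = componentwise ⊆).
-/

variable {Λ : Type*} {D : Λ → Type*}

/-- `S(a) = (V(a_λ))_λ ∈ B`, where `V(x)` is the set of maximal ideals containing `x`. -/
def SFam [∀ l, CommRing (D l)] (a : ∀ l, D l) : ∀ l, Set (MaximalSpectrum (D l)) :=
  fun l => {P | a l ∈ P.asIdeal}

/-- `z(x) = {λ | x_λ = 0}`. -/
def ZFam [∀ l, CommRing (D l)] (x : ∀ l, D l) : Set Λ := {l | x l = 0}

/-- A filter in a Boolean algebra: a nonempty subset not containing `⊥`, closed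
under meets, and upward closed. -/
def IsBFilter {B : Type*} [BooleanAlgebra B] (U : Set B) : Prop :=
  U.Nonempty ∧ ⊥ ∉ U ∧ (∀ X ∈ U, ∀ Y ∈ U, X ⊓ Y ∈ U) ∧ (∀ Y ∈ U, ∀ Z, Y ≤ Z → Z ∈ U)

/-- An ultrafilter in a Boolean algebra: a filter containing `Y` or `Yᶜ` for every `Y`. -/
def IsBUltrafilter {B : Type*} [BooleanAlgebra B] (U : Set B) : Prop :=
  IsBFilter U ∧ ∀ Y, Y ∈ U ∨ Yᶜ ∈ U

/-- Property (+): for all `r` and all nonzero `a` there is `d` lying in every maximal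
ideal containing `a` but not `r`, and in no maximal ideal containing `r`. -/
def PropertyPlus (A : Type*) [CommRing A] : Prop :=
  ∀ r a : A, a ≠ 0 → ∃ d : A,
    (∀ M : Ideal A, M.IsMaximal → a ∈ M → r ∉ M → d ∈ M) ∧
    (∀ M : Ideal A, M.IsMaximal → r ∈ M → d ∉ M)

/-- Property (++): for every `r` there is `d` with `D(r) = V(d)`, i.e. the maximal
ideals containing `d` are exactly those not containing `r`. -/
def PropertyPlusPlus (A : Type*) [CommRing A] : Prop :=
  ∀ r : A, ∃ d : A, ∀ P : MaximalSpectrum A, d ∈ P.asIdeal ↔ r ∉ P.asIdeal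


section AuxStmt13

variable [∀ l, CommRing (D l)] [∀ l, IsDomain (D l)]

private lemma zfam_mul_aux (x y : ∀ l, D l) : ZFam (x * y) = ZFam x ∪ ZFam y := by
  ext l; simp [ZFam, mul_eq_zero]

private lemma key_min_aux (T : Subring (∀ l, D l)) (P : Ideal T) (hP : P ∈ minimalPrimes T)
    {x : T} (hx : x ∈ P) : ∃ y : T, y ∉ P ∧ x * y = 0 := by
  have hprime : P.IsPrime := hP.1.1
  have hmax : IsNilpotent (algebraMap T (Localization P.primeCompl) x) ↔
      algebraMap T (Localization P.primeCompl) x ∈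
        IsLocalRing.maximalIdeal (Localization P.primeCompl) := by
    have : Ring.KrullDimLE 0 (Localization P.primeCompl) := by
      rw [Ring.krullDimLE_iff, IsLocalization.AtPrime.ringKrullDim_eq_height P,
        Ideal.height_eq_zero_iff.mpr hP]
      simp
    exact Ring.KrullDimLE.isNilpotent_iff_mem_maximalIdeal
  have hnil : IsNilpotent (algebraMap T (Localization P.primeCompl) x) := by
    rw [hmax, IsLocalization.AtPrime.to_map_mem_maximal_iff (Localization P.primeCompl) P]
    exact hx
  obtain ⟨n, hn⟩ := hnil
  rw [← map_pow, IsLocalization.map_eq_zero_iff P.primeCompl] at hn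
  obtain ⟨m, hm⟩ := hn
  refine ⟨m, m.2, ?_⟩
  have hzero : ((x * m : T) : ∀ l, D l) ^ (n + 1) = 0 := by
    have h2 : (x * m : T) ^ (n + 1) = (m * x ^ n) * (x * m ^ n) := by ring
    rw [hm, zero_mul] at h2
    exact_mod_cast congrArg (Subtype.val) h2
  have hz : ((x * m : T) : ∀ l, D l) = 0 := by
    funext l
    have h3 := congrFun hzero l
    simp only [Pi.pow_apply, Pi.zero_apply] at h3
    by_contra h
    exact h (pow_eq_zero_iff (Nat.succ_ne_zero n) |>.mp h3)
  exact Subtype.ext hz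

end AuxStmt13

/-- If the `D l` are integral domains, `T ⊆ R` a subring and `F` an ultrafilter on
`Λ`, then the set of `x ∈ T` with `z x ∈ F` is a prime ideal of `T`; moreover every
minimal prime ideal of `T` is of this form for some ultrafilter `G` on `Λ`. -/
theorem stmt_13 [∀ l, CommRing (D l)] [∀ l, IsDomain (D l)]
    (T : Subring (∀ l, D l)) (F : Ultrafilter Λ) :
    (∃ I : Ideal T, (∀ x : T, x ∈ I ↔ ZFam (x : ∀ l, D l) ∈ F) ∧ I.IsPrime) ∧
    (∀ P : Ideal T, P ∈ minimalPrimes T →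
      ∃ G : Ultrafilter Λ, ∀ x : T, x ∈ P ↔ ZFam (x : ∀ l, D l) ∈ G) := by
  constructor
  · refine ⟨{ carrier := {x : T | ZFam (x : (l : Λ) → D l) ∈ F}
              zero_mem' := ?_
              add_mem' := ?_
              smul_mem' := ?_ }, fun x => Iff.rfl, ?_⟩
    · intro x y hx hy
      refine Filter.mem_of_superset (Filter.inter_mem hx hy) ?_
      rintro l ⟨h1, h2⟩
      simp only [ZFam, Set.mem_setOf_eq] at h1 h2 ⊢
      simp [h1, h2]
    · have h : ZFam ((0 : T) : ∀ l, D l) = Set.univ := by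
        ext l; simp [ZFam]
      show ZFam ((0 : T) : ∀ l, D l) ∈ F
      rw [h]
      exact Filter.univ_mem
    · intro c x hx
      refine Filter.mem_of_superset hx ?_
      intro l h1
      simp only [ZFam, Set.mem_setOf_eq] at h1 ⊢
      simp [h1]
    · constructor
      · intro htop
        have h1 : ZFam ((1 : T) : ∀ l, D l) ∈ F := by
          have := htop ▸ (Submodule.mem_top (R := T) (x := (1 : T)))
          exact this
        have h2 : ZFam ((1 : T) : ∀ l, D l) = (∅ : Set Λ) := by
          ext l; simp [ZFam]
        rw [h2] at h1
        exact Filter.empty_notMem (F : Filter Λ) h1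
      · intro x y hxy
        have h : ZFam ((x * y : T) : ∀ l, D l) = ZFam (x : ∀ l, D l) ∪ ZFam (y : ∀ l, D l) := by
          rw [show ((x * y : T) : ∀ l, D l) = (x : ∀ l, D l) * (y : ∀ l, D l) from rfl]
          exact zfam_mul_aux _ _
        have hxy' : ZFam ((x * y : T) : ∀ l, D l) ∈ F := hxy
        rw [h, Ultrafilter.union_mem_iff] at hxy'
        exact hxy'
  · intro P hP
    have hprime : P.IsPrime := hP.1.1
    have huniv : ∃ y : T, y ∉ P ∧ (ZFam (y : ∀ l, D l))ᶜ ⊆ Set.univ :=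
      ⟨1, fun h => hprime.ne_top ((Ideal.eq_top_iff_one P).mpr h), Set.subset_univ _⟩
    let f : Filter Λ :=
      { sets := {s | ∃ y : T, y ∉ P ∧ (ZFam (y : ∀ l, D l))ᶜ ⊆ s}
        univ_sets := huniv
        sets_of_superset := by
          rintro s t ⟨y, hy, hs⟩ hst
          exact ⟨y, hy, hs.trans hst⟩
        inter_sets := by
          rintro s t ⟨y1, hy1, hs1⟩ ⟨y2, hy2, hs2⟩
          refine ⟨y1 * y2, fun h => ((hprime.mem_or_mem h).elim hy1 hy2), ?_⟩
          have h : ZFam ((y1 * y2 : T) : ∀ l, D l)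
              = ZFam (y1 : ∀ l, D l) ∪ ZFam (y2 : ∀ l, D l) := zfam_mul_aux _ _
          rw [h, Set.compl_union]
          exact Set.subset_inter ((Set.inter_subset_left).trans hs1)
            ((Set.inter_subset_right).trans hs2) }
    have hne : f.NeBot := by
      refine ⟨fun hbot => ?_⟩
      have : (∅ : Set Λ) ∈ f := hbot ▸ Filter.mem_bot
      obtain ⟨y, hy, hs⟩ := this
      apply hy
      have hy0 : y = 0 := by
        refine Subtype.ext (funext fun l => ?_)
        by_contra h
        exact hs h
      rw [hy0]; exact P.zero_mem
    obtain ⟨G, hG⟩ := Ultrafilter.exists_le f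
    refine ⟨G, fun x => ⟨fun hx => ?_, fun hx => ?_⟩⟩
    · obtain ⟨y, hy, hxy⟩ := key_min_aux T P hP hx
      refine hG (⟨y, hy, fun l hl => ?_⟩ : ZFam (x : ∀ l, D l) ∈ f)
      have h0 : (x : ∀ l, D l) l * (y : ∀ l, D l) l = 0 := by
        have := congrArg (Subtype.val) hxy
        exact congrFun this l
      rcases mul_eq_zero.mp h0 with h | h
      · exact h
      · exact absurd h hl
    · by_contra hxP
      have hc : (ZFam (x : ∀ l, D l))ᶜ ∈ f := ⟨x, hxP, le_refl _⟩
      have hc' : (ZFam (x : ∀ l, D l))ᶜ ∈ G := hG hc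
      exact (Ultrafilter.compl_mem_iff_notMem.mp hc') hx
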